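/- In the same setting, Var[N1 - N2 | Y=1] = Var[N1 - N2 | Y=0] = 2(p1(1-p2) + p2(1-p1))/(p1+p2)^2. -/

import Mathlib

noncomputable def condW (p1 p2 : ℝ) (j k : ℕ) : ℝ :=
  (Nat.choose (j + k) k : ℝ) * ((1 - p1) / 2) ^ j * ((1 - p2) / 2) ^ k * ((p1 + p2) / 2)

private lemma choose_cast_symm (j k : ℕ) : ((j + k).choose k : ℝ) = ((k + j).choose j : ℝ) := by
  rw [Nat.add_comm, Nat.choose_symm_add]

/-- `∑' k, C(j+k,k) x^k = 1/(1-x)^(j+1)`. -/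
private lemma hA {x : ℝ} (hx : |x| < 1) (j : ℕ) :
    HasSum (fun k : ℕ ↦ ((j + k).choose k : ℝ) * x ^ k) (1 / (1 - x) ^ (j + 1)) := by
  have h := hasSum_choose_mul_geometric_of_norm_lt_one (𝕜 := ℝ) j (by simpa using hx)
  convert h using 2 with k
  · rfl
  rw [choose_cast_symm]

private lemma hB {x : ℝ} (hx : |x| < 1) (j : ℕ) :
    HasSum (fun k : ℕ ↦ (k : ℝ) * ((j + k).choose k : ℝ) * x ^ k)
      (((j : ℝ) + 1) * x / (1 - x) ^ (j + 2)) := by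
  set f : ℕ → ℝ := fun k ↦ (k : ℝ) * ((j + k).choose k : ℝ) * x ^ k with hf
  have key : ∀ k : ℕ, f (k + 1) = (((j : ℝ) + 1) * x) * (((j + 1 + k).choose k : ℝ) * x ^ k) := by
    intro k
    have hnat : (j + (k + 1)).choose (k + 1) * (k + 1) = (j + 1 + k).choose k * (j + 1) := by
      have := Nat.choose_succ_right_eq (j + k + 1) k
      have e1 : j + (k + 1) = j + k + 1 := by omega
      have e2 : j + 1 + k = j + k + 1 := by omega
      rw [e1, e2, this]
      congr 1
      omega
    have hcast : ((j + (k + 1)).choose (k + 1) : ℝ) * ((k : ℝ) + 1) =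
        ((j + 1 + k).choose k : ℝ) * ((j : ℝ) + 1) := by
      exact_mod_cast congrArg (Nat.cast : ℕ → ℝ) hnat
    simp only [hf]
    push_cast
    linear_combination x ^ (k + 1) * hcast
  have h := (hA hx (j + 1)).mul_left (((j : ℝ) + 1) * x)
  have hf0 : f 0 = 0 := by simp [hf]
  rw [← hasSum_nat_add_iff' 1]
  simp only [Finset.range_one, Finset.sum_singleton, hf0, sub_zero]
  have hfun : (fun k : ℕ ↦ f (k + 1))
      = fun k : ℕ ↦ (((j : ℝ) + 1) * x) * (((j + 1 + k).choose k : ℝ) * x ^ k) := funext key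
  rw [hfun, show ((j : ℝ) + 1) * x / (1 - x) ^ (j + 2)
      = (((j : ℝ) + 1) * x) * (1 / (1 - x) ^ (j + 1 + 1)) by ring]
  exact h

private lemma hK {x : ℝ} (hx : |x| < 1) (j : ℕ) :
    HasSum (fun k : ℕ ↦ (k : ℝ) * ((k : ℝ) - 1) * ((j + k).choose k : ℝ) * x ^ k)
      (((j : ℝ) + 1) * ((j : ℝ) + 2) * x ^ 2 / (1 - x) ^ (j + 3)) := by
  set f : ℕ → ℝ := fun k ↦ (k : ℝ) * ((k : ℝ) - 1) * ((j + k).choose k : ℝ) * x ^ k with hf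
  have key : ∀ k : ℕ, f (k + 2) =
      (((j : ℝ) + 1) * ((j : ℝ) + 2) * x ^ 2) * (((j + 2 + k).choose k : ℝ) * x ^ k) := by
    intro k
    have h1 : (j + k + 2).choose (k + 2) * (k + 2) = (j + k + 2).choose (k + 1) * (j + 1) := by
      have := Nat.choose_succ_right_eq (j + k + 2) (k + 1)
      rw [this]; congr 1; omega
    have h2 : (j + k + 2).choose (k + 1) * (k + 1) = (j + k + 2).choose k * (j + 2) := by
      have := Nat.choose_succ_right_eq (j + k + 2) k
      rw [this]; congr 1; omega
    have hnat : (j + k + 2).choose (k + 2) * ((k + 2) * (k + 1)) =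
        (j + k + 2).choose k * ((j + 1) * (j + 2)) := by
      calc (j + k + 2).choose (k + 2) * ((k + 2) * (k + 1))
          = (j + k + 2).choose (k + 2) * (k + 2) * (k + 1) := by ring
        _ = (j + k + 2).choose (k + 1) * (j + 1) * (k + 1) := by rw [h1]
        _ = (j + k + 2).choose (k + 1) * (k + 1) * (j + 1) := by ring
        _ = (j + k + 2).choose k * (j + 2) * (j + 1) := by rw [h2]
        _ = (j + k + 2).choose k * ((j + 1) * (j + 2)) := by ring
    have hcast : ((j + k + 2).choose (k + 2) : ℝ) * (((k : ℝ) + 2) * ((k : ℝ) + 1)) =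
        ((j + k + 2).choose k : ℝ) * (((j : ℝ) + 1) * ((j : ℝ) + 2)) := by
      exact_mod_cast congrArg (Nat.cast : ℕ → ℝ) hnat
    have e1 : j + (k + 2) = j + k + 2 := by omega
    have e2 : j + 2 + k = j + k + 2 := by omega
    simp only [hf, e1, e2]
    push_cast
    linear_combination x ^ (k + 2) * hcast
  have h := (hA hx (j + 2)).mul_left (((j : ℝ) + 1) * ((j : ℝ) + 2) * x ^ 2)
  have hf0 : f 0 = 0 := by simp [hf]
  have hf1 : f 1 = 0 := by simp [hf]
  rw [← hasSum_nat_add_iff' 2]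
  simp only [Finset.sum_range_succ, Finset.sum_range_zero, hf0, hf1, add_zero, zero_add, sub_zero]
  have hfun : (fun k : ℕ ↦ f (k + 2))
      = fun k : ℕ ↦ (((j : ℝ) + 1) * ((j : ℝ) + 2) * x ^ 2)
          * (((j + 2 + k).choose k : ℝ) * x ^ k) := funext key
  rw [hfun, show ((j : ℝ) + 1) * ((j : ℝ) + 2) * x ^ 2 / (1 - x) ^ (j + 3)
      = (((j : ℝ) + 1) * ((j : ℝ) + 2) * x ^ 2) * (1 / (1 - x) ^ (j + 2 + 1)) by ring]
  exact h

private lemma g1 {r : ℝ} (hr : |r| < 1) :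
    HasSum (fun j : ℕ ↦ ((j : ℝ) + 1) * r ^ j) (1 / (1 - r) ^ 2) := by
  have h := hasSum_choose_mul_geometric_of_norm_lt_one (𝕜 := ℝ) 1 (by simpa using hr)
  have hfun : (fun j : ℕ ↦ ((j : ℝ) + 1) * r ^ j)
      = fun n : ℕ ↦ ((n + 1).choose 1 : ℝ) * r ^ n := by
    funext j; simp [Nat.choose_one_right]
  rw [hfun, show (1:ℝ) / (1 - r) ^ 2 = 1 / (1 - r) ^ (1 + 1) by norm_num]
  exact h

private lemma g2 {r : ℝ} (hr : |r| < 1) :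
    HasSum (fun j : ℕ ↦ ((j : ℝ) + 1) * ((j : ℝ) + 2) * r ^ j) (2 / (1 - r) ^ 3) := by
  have h := (hasSum_choose_mul_geometric_of_norm_lt_one (𝕜 := ℝ) 2 (by simpa using hr)).mul_left 2
  have hch : ∀ j : ℕ, 2 * ((j + 2).choose 2 : ℝ) = ((j : ℝ) + 1) * ((j : ℝ) + 2) := by
    intro j
    have : (j + 2).choose 2 * 2 = (j + 1) * (j + 2) := by
      induction j with
      | zero => rfl
      | succ n ih =>
        have : (n + 1 + 2).choose 2 = (n + 2).choose 1 + (n + 2).choose 2 := by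
          rw [show n + 1 + 2 = (n + 2) + 1 by omega, Nat.choose_succ_succ]
        rw [this]
        simp only [Nat.choose_one_right]
        rw [Nat.add_mul, ih]
        ring
    have := congrArg (Nat.cast : ℕ → ℝ) this
    push_cast at this
    linarith
  have hfun : (fun j : ℕ ↦ ((j : ℝ) + 1) * ((j : ℝ) + 2) * r ^ j)
      = fun n : ℕ ↦ 2 * (((n + 2).choose 2 : ℝ) * r ^ n) := by
    funext j; rw [← mul_assoc, ← hch j]
  rw [hfun, show (2:ℝ) / (1 - r) ^ 3 = 2 * (1 / (1 - r) ^ (2 + 1)) by ring]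
  exact h

private lemma alg (a b s : ℝ) (h1 : 1 - b ≠ 0) (h2 : 1 - a - b ≠ 0) :
    (1 - a - b) * (1 / (1 - b) - 2 * b / (1 - b) ^ 2 + b ^ 2 / (1 - b) ^ 3) *
        (2 / ((1 - a - b) / (1 - b)) ^ 3) +
      (1 - a - b) * ((2 * s - 3) / (1 - b) - (2 * s - 5) * b / (1 - b) ^ 2) *
        (1 / ((1 - a - b) / (1 - b)) ^ 2) +
      (1 - a - b) * ((s - 1) ^ 2 / (1 - b)) * ((1 - a - b) / (1 - b))⁻¹ -
      ((1 - a - b) * (1 / (1 - b) - b / (1 - b) ^ 2) * (1 / ((1 - a - b) / (1 - b)) ^ 2) +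
        (1 - a - b) * ((s - 1) / (1 - b)) * ((1 - a - b) / (1 - b))⁻¹) ^ 2 =
      (a + b - 4 * a * b) / (1 - a - b) ^ 2 := by
  field_simp
  ring

set_option maxHeartbeats 2000000 in
/-- master lemma: variance formula for general shift `s`. -/
private lemma master (p1 p2 s : ℝ) (hp1 : p1 ∈ Set.Ioo (0:ℝ) 1) (hp2 : p2 ∈ Set.Ioo (0:ℝ) 1) :
    ((∑' j : ℕ, ∑' k : ℕ, ((j : ℝ) + s - (k : ℝ)) ^ 2 * condW p1 p2 j k) -
      (∑' j : ℕ, ∑' k : ℕ, ((j : ℝ) + s - (k : ℝ)) * condW p1 p2 j k) ^ 2 =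
      2 * (p1 * (1 - p2) + p2 * (1 - p1)) / (p1 + p2) ^ 2) := by
  obtain ⟨hp1a, hp1b⟩ := hp1
  obtain ⟨hp2a, hp2b⟩ := hp2
  set a : ℝ := (1 - p1) / 2 with ha
  set b : ℝ := (1 - p2) / 2 with hb
  set c : ℝ := (p1 + p2) / 2 with hc
  have ha0 : 0 < a := by rw [ha]; linarith
  have hb0 : 0 < b := by rw [hb]; linarith
  have hc0 : 0 < c := by rw [hc]; linarith
  have habc : a + b + c = 1 := by rw [ha, hb, hc]; ring
  have h1b : 0 < 1 - b := by linarith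
  have h1bne : (1 - b) ≠ 0 := ne_of_gt h1b
  have hbx : |b| < 1 := by rw [abs_of_pos hb0]; linarith
  set r : ℝ := a / (1 - b) with hrdef
  have hr0 : 0 < r := div_pos ha0 h1b
  have hr1 : r < 1 := by
    rw [hrdef, div_lt_one h1b]; linarith
  have hrx : |r| < 1 := by rw [abs_of_pos hr0]; exact hr1
  have h1r : 1 - r = c / (1 - b) := by
    rw [hrdef]; field_simp; linarith
  have h1rne : (1 - r) ≠ 0 := by
    rw [h1r]; exact div_ne_zero (ne_of_gt hc0) h1bne
  -- inner sums
  have hcondW : ∀ j k, condW p1 p2 j k = ((j + k).choose k : ℝ) * a ^ j * b ^ k * c := by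
    intro j k; rw [condW, ha, hb, hc]
  have hF2 : ∀ j : ℕ,
      HasSum (fun k : ℕ ↦ ((j : ℝ) + s - (k : ℝ)) ^ 2 * condW p1 p2 j k)
        (a ^ j * c * (((j : ℝ) + s) ^ 2 / (1 - b) ^ (j + 1)
          - (2 * ((j : ℝ) + s) - 1) * (((j : ℝ) + 1) * b / (1 - b) ^ (j + 2))
          + ((j : ℝ) + 1) * ((j : ℝ) + 2) * b ^ 2 / (1 - b) ^ (j + 3))) := by
    intro j
    have h := ((((hA hbx j).mul_left (((j : ℝ) + s) ^ 2)).sub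
      ((hB hbx j).mul_left (2 * ((j : ℝ) + s) - 1))).add (hK hbx j)).mul_left (a ^ j * c)
    convert h using 2 with k
    · rfl
    · rw [hcondW]; ring
    · ring
  have hF1 : ∀ j : ℕ,
      HasSum (fun k : ℕ ↦ ((j : ℝ) + s - (k : ℝ)) * condW p1 p2 j k)
        (a ^ j * c * (((j : ℝ) + s) / (1 - b) ^ (j + 1)
          - ((j : ℝ) + 1) * b / (1 - b) ^ (j + 2))) := by
    intro j
    have h := (((hA hbx j).mul_left ((j : ℝ) + s)).sub (hB hbx j)).mul_left (a ^ j * c)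
    convert h using 2 with k
    · rfl
    · rw [hcondW]; ring
    · ring
  -- outer sums
  set w2 : ℝ := 1 / (1 - b) - 2 * b / (1 - b) ^ 2 + b ^ 2 / (1 - b) ^ 3 with hw2
  set w1 : ℝ := (2 * s - 3) / (1 - b) - (2 * s - 5) * b / (1 - b) ^ 2 with hw1
  set w0 : ℝ := (s - 1) ^ 2 / (1 - b) with hw0
  set v1 : ℝ := 1 / (1 - b) - b / (1 - b) ^ 2 with hv1
  set v0 : ℝ := (s - 1) / (1 - b) with hv0
  have hg0 := hasSum_geometric_of_norm_lt_one (ξ := r) (by simpa using hrx)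
  have hrpow : ∀ j : ℕ, r ^ j = a ^ j / (1 - b) ^ j := by
    intro j; rw [hrdef, div_pow]
  have hS2 : HasSum (fun j : ℕ ↦ (a ^ j * c * (((j : ℝ) + s) ^ 2 / (1 - b) ^ (j + 1)
          - (2 * ((j : ℝ) + s) - 1) * (((j : ℝ) + 1) * b / (1 - b) ^ (j + 2))
          + ((j : ℝ) + 1) * ((j : ℝ) + 2) * b ^ 2 / (1 - b) ^ (j + 3))))
      (c * w2 * (2 / (1 - r) ^ 3) + c * w1 * (1 / (1 - r) ^ 2) + c * w0 * (1 - r)⁻¹) := by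
    have h := (((g2 hrx).mul_left (c * w2)).add ((g1 hrx).mul_left (c * w1))).add
      (hg0.mul_left (c * w0))
    convert h using 1
    · rfl
    funext j
    simp only [hrpow j, hw2, hw1, hw0]
    rw [pow_succ (1-b) j, pow_succ (1-b) (j+1), pow_succ (1-b) (j+2), pow_succ (1-b) (j+1)]
    field_simp
    ring
  have hS1 : HasSum (fun j : ℕ ↦ (a ^ j * c * (((j : ℝ) + s) / (1 - b) ^ (j + 1)
          - ((j : ℝ) + 1) * b / (1 - b) ^ (j + 2))))
      (c * v1 * (1 / (1 - r) ^ 2) + c * v0 * (1 - r)⁻¹) := by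
    have h := ((g1 hrx).mul_left (c * v1)).add (hg0.mul_left (c * v0))
    convert h using 1
    · rfl
    funext j
    simp only [hrpow j, hv1, hv0]
    rw [pow_succ (1-b) j, pow_succ (1-b) (j+1)]
    field_simp
    ring
  -- put together
  rw [tsum_congr (fun j ↦ (hF2 j).tsum_eq), tsum_congr (fun j ↦ (hF1 j).tsum_eq),
    hS2.tsum_eq, hS1.tsum_eq]
  simp only [hw2, hw1, hw0, hv1, hv0]
  have hppne : p1 + p2 ≠ 0 := by positivity
  have hcab : c = 1 - a - b := by linarith
  have h2 : 1 - a - b ≠ 0 := by rw [← hcab]; exact ne_of_gt hc0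
  have hrhs : 2 * (p1 * (1 - p2) + p2 * (1 - p1)) / (p1 + p2) ^ 2
      = (a + b - 4 * a * b) / (1 - a - b) ^ 2 := by
    rw [ha, hb]
    rw [show (1:ℝ) - (1 - p1) / 2 - (1 - p2) / 2 = (p1 + p2) / 2 by ring]
    rw [div_eq_div_iff (by positivity) (by positivity)]
    ring
  rw [hrhs, h1r, hcab]
  exact alg a b s h1bne h2

/-- `Var[N1 - N2 | Y = 1] = Var[N1 - N2 | Y = 0] = 2(p1(1-p2)+p2(1-p1))/(p1+p2)^2`. -/
theorem stmt6 (p1 p2 : ℝ) (hp1 : p1 ∈ Set.Ioo (0:ℝ) 1) (hp2 : p2 ∈ Set.Ioo (0:ℝ) 1) :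
    ((∑' j : ℕ, ∑' k : ℕ, ((j : ℝ) + 1 - (k : ℝ)) ^ 2 * condW p1 p2 j k) -
      (∑' j : ℕ, ∑' k : ℕ, ((j : ℝ) + 1 - (k : ℝ)) * condW p1 p2 j k) ^ 2 =
      2 * (p1 * (1 - p2) + p2 * (1 - p1)) / (p1 + p2) ^ 2) ∧
    ((∑' j : ℕ, ∑' k : ℕ, ((j : ℝ) - ((k : ℝ) + 1)) ^ 2 * condW p1 p2 j k) -
      (∑' j : ℕ, ∑' k : ℕ, ((j : ℝ) - ((k : ℝ) + 1)) * condW p1 p2 j k) ^ 2 =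
      2 * (p1 * (1 - p2) + p2 * (1 - p1)) / (p1 + p2) ^ 2) := by
  constructor
  · exact master p1 p2 1 hp1 hp2
  · have h := master p1 p2 (-1) hp1 hp2
    have e : ∀ j k : ℕ, ((j : ℝ) - ((k : ℝ) + 1)) = ((j : ℝ) + (-1) - (k : ℝ)) := by
      intros; ring
    simp only [e]
    exact h
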